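/- Let t be an SL₂-tiling with no entry equal to 1, i.e. t(i,j) ≥ 2 for all i, j, and let m be the minimal value attained by t. Then m occurs at most once in each row and at most once in each column of t: if t(b,v) = t(b,v') = m then v = v', and if t(b,v) = t(b',v) = m then b = b'. -/

import Mathlib

/-- An `SL₂`-tiling: all entries are `≥ 1` and every adjacent `2×2` minor is `1`. -/
def IsSL2Tiling (t : ℤ → ℤ → ℤ) : Prop :=
  (∀ i j, 1 ≤ t i j) ∧
  (∀ i j, t i j * t (i+1) (j+1) - t i (j+1) * t (i+1) j = 1)

private lemma quiddity (t : ℤ → ℤ → ℤ) (ht : IsSL2Tiling t) (j : ℤ) :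
    ∃ a : ℤ, ∀ i, t i (j-1) + t i (j+1) = a * t i j := by
  have hdet := ht.2
  set f : ℤ → ℤ := fun i => t i (j-1) * t (i+1) (j+1) - t i (j+1) * t (i+1) (j-1) with hf
  have key : ∀ i, f i * t i j = t i (j-1) + t i (j+1) ∧
      f i * t (i+1) j = t (i+1) (j-1) + t (i+1) (j+1) := by
    intro i
    have h1 := hdet i (j-1)
    have h2 := hdet i j
    rw [show j - 1 + 1 = j by ring] at h1
    constructor
    · simp only [hf]
      linear_combination t i (j-1) * h2 + t i (j+1) * h1
    · simp only [hf]
      linear_combination t (i+1) (j-1) * h2 + t (i+1) (j+1) * h1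
  have hconst : ∀ i, f (i+1) = f i := by
    intro i
    have h1 := (key (i+1)).1
    have h2 := (key i).2
    have hne : t (i+1) j ≠ 0 := by
      have := ht.1 (i+1) j; omega
    exact mul_right_cancel₀ hne (h1.trans h2.symm)
  have hall : ∀ i, f i = f 0 := by
    intro i
    induction i using Int.induction_on with
    | zero => rfl
    | succ n ih => rw [hconst n]; exact ih
    | pred n ih =>
        have h := hconst (-(n:ℤ) - 1)
        rw [show -(n:ℤ) - 1 + 1 = -(n:ℤ) by ring] at h
        rw [h] at ih; exact ih
  refine ⟨f 0, fun i => ?_⟩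
  rw [← hall i]
  exact ((key i).1).symm

private lemma adjacent (t : ℤ → ℤ → ℤ) (ht : IsSL2Tiling t)
    (h2 : ∀ i j : ℤ, 2 ≤ t i j) (m b v : ℤ)
    (hb : t b v = m) (hb' : t b (v+1) = m) : False := by
  have hdet := ht.2 b v
  rw [hb, hb'] at hdet
  have hm : 2 ≤ m := hb ▸ h2 b v
  have hdvd : m ∣ 1 := ⟨t (b+1) (v+1) - t (b+1) v, by linarith [hdet, mul_sub m (t (b+1) (v+1)) (t (b+1) v)]⟩
  have := Int.le_of_dvd one_pos hdvd
  omega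

private lemma rowLemma : ∀ k : ℕ, ∀ t : ℤ → ℤ → ℤ, IsSL2Tiling t →
    (∀ i j : ℤ, 2 ≤ t i j) → ∀ m : ℤ, (∀ i j : ℤ, m ≤ t i j) →
    ∀ b v : ℤ, t b v = m → t b (v + (k:ℤ) + 1) = m → False := by
  intro k
  induction k with
  | zero =>
      intro t ht h2 m hmin b v hv hv'
      have hv1 : t b (v + 1) = m := by
        rw [show v + 1 = v + ((0:ℕ):ℤ) + 1 by norm_num]
        exact hv'
      exact adjacent t ht h2 m b v hv hv1
  | succ k ih =>
      intro t ht h2 m hmin b v hv hv'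
      have hv2 : t b (v + (k:ℤ) + 2) = m := by
        rw [show v + (k:ℤ) + 2 = v + ((k+1 : ℕ) : ℤ) + 1 by push_cast; ring]
        exact hv'
      by_cases H : ∃ j : ℤ, v < j ∧ j < v + (k:ℤ) + 2 ∧ ∀ i, t i (j-1) + t i (j+1) = t i j
      · obtain ⟨j, hj1, hj2, hj3⟩ := H
        set t' : ℤ → ℤ → ℤ := fun i l => if l < j then t i l else t i (l+1) with ht'def
        have htil : IsSL2Tiling t' := by
          constructor
          · intro i l; simp only [ht'def]; split <;> exact ht.1 _ _
          · intro i l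
            rcases lt_trichotomy l (j-1) with h | h | h
            · have e1 : l < j := by omega
              have e2 : l + 1 < j := by omega
              simp only [ht'def, if_pos e1, if_pos e2]
              exact ht.2 i l
            · have e1 : l < j := by omega
              have e2 : ¬ (l + 1 < j) := by omega
              simp only [ht'def, if_pos e1, if_neg e2]
              rw [h, show j - 1 + 1 + 1 = j + 1 by ring]
              have h3i := hj3 i
              have h3i' := hj3 (i+1)
              have hd := ht.2 i j
              linear_combination hd + t (i+1) (j+1) * h3i - t i (j+1) * h3i'
            · have e1 : ¬ (l < j) := by omega
              have e2 : ¬ (l + 1 < j) := by omega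
              simp only [ht'def, if_neg e1, if_neg e2]
              exact ht.2 i (l+1)
        have h2' : ∀ i l : ℤ, 2 ≤ t' i l := by
          intro i l; simp only [ht'def]; split <;> exact h2 _ _
        have hmin' : ∀ i l : ℤ, m ≤ t' i l := by
          intro i l; simp only [ht'def]; split <;> exact hmin _ _
        have hbv' : t' b v = m := by
          simp only [ht'def, if_pos hj1]; exact hv
        have hbv'' : t' b (v + (k:ℤ) + 1) = m := by
          have e : ¬ (v + (k:ℤ) + 1 < j) := by omega
          simp only [ht'def, if_neg e]
          rw [show v + (k:ℤ) + 1 + 1 = v + (k:ℤ) + 2 by ring]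
          exact hv2
        exact ih t' htil h2' m hmin' b v hbv' hbv''
      · push_neg at H
        have hconv : ∀ j : ℤ, v < j → j < v + (k:ℤ) + 2 →
            2 * t b j ≤ t b (j-1) + t b (j+1) := by
          intro j hj1 hj2
          obtain ⟨a, ha⟩ := quiddity t ht j
          have hb := ha b
          have h2j := h2 b j
          have h2m := h2 b (j-1)
          have h2p := h2 b (j+1)
          rcases le_or_gt 2 a with h | h
          · nlinarith
          · have ha1 : a = 1 := by nlinarith
            obtain ⟨i, hi⟩ := H j hj1 hj2
            exfalso
            apply hi
            rw [ha i, ha1, one_mul]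
        have Q : ∀ n : ℕ, (n:ℤ) ≤ (k:ℤ) + 1 →
            t b (v+1) ≤ t b (v + 1 + (n:ℤ)) ∧ t b (v + (n:ℤ)) ≤ t b (v + 1 + (n:ℤ)) := by
          intro n
          induction n with
          | zero =>
              intro _
              constructor
              · norm_num
              · have : t b v ≤ t b (v + 1) := by rw [hv]; exact hmin b (v+1)
                norm_num
                exact this
          | succ n ihn =>
              intro hn
              push_cast at hn
              have hn' : (n:ℤ) ≤ (k:ℤ) + 1 := by linarith
              obtain ⟨ihA, ihB⟩ := ihn hn'
              have hc := hconv (v + 1 + (n:ℤ)) (by linarith [Int.ofNat_nonneg n]) (by linarith)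
              rw [show v + 1 + (n:ℤ) - 1 = v + (n:ℤ) by ring] at hc
              have e1 : v + 1 + ((n:ℕ)+1 : ℤ) = v + 1 + (n:ℤ) + 1 := by ring
              have e2 : v + ((n:ℕ)+1 : ℤ) = v + 1 + (n:ℤ) := by ring
              push_cast
              rw [e1, e2]
              constructor <;> linarith
        have hfin := (Q (k+1) (by push_cast; linarith)).1
        have e3 : v + 1 + ((k:ℕ)+1 : ℤ) = v + (k:ℤ) + 2 := by ring
        push_cast at hfin
        rw [e3, hv2] at hfin
        have : t b (v+1) = m := le_antisymm hfin (hmin b (v+1))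
        exact adjacent t ht h2 m b v hv this

theorem minimum_once_per_row_and_column (t : ℤ → ℤ → ℤ) (ht : IsSL2Tiling t)
    (h2 : ∀ i j : ℤ, 2 ≤ t i j)
    (m : ℤ) (hmin : ∀ i j : ℤ, m ≤ t i j) (hatt : ∃ i j : ℤ, t i j = m) :
    (∀ b v v' : ℤ, t b v = m → t b v' = m → v = v') ∧
    (∀ b b' v : ℤ, t b v = m → t b' v = m → b = b') := by
  have row : ∀ b v v' : ℤ, v < v' → t b v = m → t b v' = m → False := by
    intro b v v' hlt hbv hbv'
    refine rowLemma (v' - v - 1).toNat t ht h2 m hmin b v hbv ?_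
    have e : v + ((v' - v - 1).toNat : ℤ) + 1 = v' := by omega
    rw [e]; exact hbv'
  constructor
  · intro b v v' hbv hbv'
    rcases lt_trichotomy v v' with h | h | h
    · exact absurd (row b v v' h hbv hbv') (by simp)
    · exact h
    · exact absurd (row b v' v h hbv' hbv) (by simp)
  · intro b b' v hbv hbv'
    have ht' : IsSL2Tiling (fun i j => t j i) := by
      refine ⟨fun i j => ht.1 j i, fun i j => ?_⟩
      have := ht.2 j i
      ring_nf
      ring_nf at this
      linarith
    have row' : ∀ c w w' : ℤ, w < w' → t w c = m → t w' c = m → False := by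
      intro c w w' hlt hw hw'
      refine rowLemma (w' - w - 1).toNat (fun i j => t j i) ht'
        (fun i j => h2 j i) m (fun i j => hmin j i) c w hw ?_
      have e : w + ((w' - w - 1).toNat : ℤ) + 1 = w' := by omega
      rw [e]; exact hw'
    rcases lt_trichotomy b b' with h | h | h
    · exact absurd (row' v b b' h hbv hbv') (by simp)
    · exact h
    · exact absurd (row' v b' b h hbv' hbv) (by simp)
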